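/- Let X be a finite list of vectors in a lattice Λ, spanning V = Λ ⊗ ℝ. Then δ(X) := Σ_{b ∈ B(X)} |det(b)| equals Σ_{e^φ ∈ P(X)} d(X_φ), where P(X) is the union over bases b ⊆ X of the finite subgroups T(b) ⊆ T = Hom(Λ, ℂ*) of characters trivial on the sublattice generated by b, X_φ = {a ∈ X : e^{⟨φ|a⟩} = 1}, and d(X_φ) is the number of bases extractable from X_φ. -/

import Mathlib

open scoped Classical

section AuxChar

variable {A : Type*} [AddCommGroup A] {M : Type*} [CommMonoid M]

lemma addChar_map_neg_eq_one (χ : AddChar A M) {x : A} (hx : χ x = 1) : χ (-x) = 1 := by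
  have h := χ.map_add_eq_mul x (-x)
  rw [add_neg_cancel, χ.map_zero_eq_one, hx, one_mul] at h
  exact h.symm

lemma addChar_eq_one_of_mem_span (χ : AddChar A M) {S : Set A}
    (h : ∀ x ∈ S, χ x = 1) {x : A} (hx : x ∈ Submodule.span ℤ S) : χ x = 1 := by
  induction hx using Submodule.span_induction with
  | mem x hxS => exact h x hxS
  | zero => exact χ.map_zero_eq_one
  | add x y _ _ hx hy => rw [χ.map_add_eq_mul, hx, hy, one_mul]
  | smul z x _ hx =>
      obtain ⟨n, rfl | rfl⟩ := z.eq_nat_or_neg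
      · rw [natCast_zsmul, χ.map_nsmul_eq_pow, hx, one_pow]
      · rw [neg_smul, natCast_zsmul]
        exact addChar_map_neg_eq_one χ (by rw [χ.map_nsmul_eq_pow, hx, one_pow])

/-- Characters with values in `ℂ` vs in `ℂˣ`. -/
def addCharUnitsEquiv (A : Type*) [AddCommGroup A] : AddChar A ℂ ≃ AddChar A ℂˣ where
  toFun χ := (AddChar.toMonoidHomEquiv (A := A) (M := ℂˣ)).symm χ.toMonoidHom.toHomUnits
  invFun ψ := (AddChar.toMonoidHomEquiv (A := A) (M := ℂ)).symm ((Units.coeHom ℂ).comp ψ.toMonoidHom)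
  left_inv χ := DFunLike.ext _ _ fun a => rfl
  right_inv ψ := DFunLike.ext _ _ fun a => Units.ext rfl

lemma addCharUnitsEquiv_eq_one_iff {A : Type*} [AddCommGroup A] (χ : AddChar A ℂ) (a : A) :
    addCharUnitsEquiv A χ a = 1 ↔ χ a = 1 := by
  constructor
  · intro h; exact congrArg Units.val h
  · intro h; exact Units.ext h

end AuxChar

section Quot

variable {A : Type*} [AddCommGroup A]

/-- Characters trivial on a subgroup `N` vs characters of the quotient. -/
def trivEquivQuot (N : Submodule ℤ A) :
    {ψ : AddChar A ℂˣ // ∀ x ∈ N, ψ x = 1} ≃ AddChar (A ⧸ N) ℂˣ where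
  toFun ψh := (AddChar.toAddMonoidHomEquiv (A := A ⧸ N) (M := ℂˣ)).symm
    ((N.liftQ ((AddChar.toAddMonoidHomEquiv (A := A) (M := ℂˣ)) ψh.1).toIntLinearMap
      (fun x hx => by
        simp only [LinearMap.mem_ker, AddMonoidHom.coe_toIntLinearMap,
          AddChar.toAddMonoidHomEquiv_apply, ψh.2 x hx]
        rfl)).toAddMonoidHom)
  invFun φ := ⟨φ.compAddMonoidHom N.mkQ.toAddMonoidHom, fun x hx => by
    show φ (N.mkQ x) = 1
    rw [show N.mkQ x = 0 from (Submodule.Quotient.mk_eq_zero N).mpr hx]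
    exact φ.map_zero_eq_one⟩
  left_inv ψh := Subtype.ext (DFunLike.ext _ _ fun a => rfl)
  right_inv φ := DFunLike.ext _ _ fun q => by
    obtain ⟨a, rfl⟩ := Submodule.Quotient.mk_surjective N q
    rfl

lemma card_addChar_units (Q : Type*) [AddCommGroup Q] [Finite Q] :
    Nat.card (AddChar Q ℂˣ) = Nat.card Q := by
  have : NeZero (Monoid.exponent (Multiplicative Q)) :=
    ⟨Monoid.exponent_ne_zero_of_finite⟩
  obtain ⟨e2⟩ := CommGroup.monoidHom_mulEquiv_of_hasEnoughRootsOfUnity (Multiplicative Q) ℂ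
  rw [Nat.card_congr (AddChar.toMonoidHomEquiv (A := Q) (M := ℂˣ))]
  exact Nat.card_congr e2.toEquiv

lemma finite_addChar_units (Q : Type*) [AddCommGroup Q] [Finite Q] :
    Finite (AddChar Q ℂˣ) := by
  have : NeZero (Monoid.exponent (Multiplicative Q)) :=
    ⟨Monoid.exponent_ne_zero_of_finite⟩
  obtain ⟨e2⟩ := CommGroup.monoidHom_mulEquiv_of_hasEnoughRootsOfUnity (Multiplicative Q) ℂ
  exact Finite.of_equiv _ ((AddChar.toMonoidHomEquiv (A := Q) (M := ℂˣ)).trans e2.toEquiv).symm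

end Quot

/-- Real realization of an integral vector list. -/
def XRe {s : ℕ} {ι : Type*} (X : ι → (Fin s → ℤ)) (i : ι) : Fin s → ℝ :=
  fun j => (X i j : ℝ)

/-- `b` is a basis (of `V = Λ ⊗ ℝ`) extracted from `X`. -/
def IsBasisOf {s : ℕ} {ι : Type*} (X : ι → (Fin s → ℤ)) (b : Finset ι) : Prop :=
  LinearIndependent ℝ (fun i : ↥b => XRe X i) ∧ Submodule.span ℝ (XRe X '' ↑b) = ⊤

/-- `|det(b)| = [Λ : Λ_b]`, the index of the sublattice generated by `b`. -/
noncomputable def detIndex {s : ℕ} {ι : Type*} (X : ι → (Fin s → ℤ)) (b : Finset ι) : ℕ :=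
  Nat.card ((Fin s → ℤ) ⧸ Submodule.span ℤ (X '' ↑b))

section Main

variable {s : ℕ} {ι : Type*}

open Matrix in
lemma finite_quot (X : ι → (Fin s → ℤ)) (b : Finset ι) (hb : IsBasisOf X b) :
    Finite ((Fin s → ℤ) ⧸ Submodule.span ℤ (X '' ↑b)) := by
  classical
  have hrange : Set.range (fun i : ↥b => XRe X i) = XRe X '' ↑b := by
    rw [show (fun i : ↥b => XRe X i) = XRe X ∘ (Subtype.val : ↥b → ι) from rfl,
      Set.range_comp, Subtype.range_coe]
  let B : Module.Basis ↥b ℝ (Fin s → ℝ) := Module.Basis.mk hb.1 (by rw [hrange, hb.2])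
  have hcard : Fintype.card ↥b = s := by
    have h1 := Module.finrank_eq_card_basis B
    simp only [Module.finrank_fin_fun] at h1
    exact h1.symm
  let e : Fin s ≃ ↥b := (Fintype.equivFinOfCardEq hcard).symm
  set M : Matrix (Fin s) (Fin s) ℤ := Matrix.of (fun j k => X ((e k) : ι) j) with hM
  have hcols : ∀ k, (M.map (Int.cast : ℤ → ℝ))ᵀ k = XRe X ((e k) : ι) := fun k => rfl
  have hli : LinearIndependent ℝ (fun k : Fin s => XRe X ((e k) : ι)) :=
    hb.1.comp e e.injective
  have hunit : IsUnit (M.map (Int.cast : ℤ → ℝ)) := by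
    rw [← Matrix.linearIndependent_cols_iff_isUnit]
    exact hli
  have hMdet : M.det ≠ 0 := by
    intro h0
    have : (M.map (Int.cast : ℤ → ℝ)).det = 0 := by
      rw [show M.map (Int.cast : ℤ → ℝ) = (Int.castRingHom ℝ).mapMatrix M from rfl,
        ← RingHom.map_det, h0]
      simp
    exact ((Matrix.isUnit_iff_isUnit_det _).mp hunit).ne_zero this
  have htor : ∀ v : Fin s → ℤ, M.det • v ∈ Submodule.span ℤ (X '' ↑b) := by
    intro v
    have h1 : M.det • v = M.mulVec (M.adjugate.mulVec v) := by
      rw [Matrix.mulVec_mulVec, Matrix.mul_adjugate, Matrix.smul_mulVec,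
        Matrix.one_mulVec]
    have h2 : M.mulVec (M.adjugate.mulVec v) =
        ∑ k : Fin s, (M.adjugate.mulVec v k) • X ((e k) : ι) := by
      funext j
      simp [Matrix.mulVec, dotProduct, Finset.sum_apply, mul_comm, hM]
    rw [h1, h2]
    exact Submodule.sum_mem _ fun k _ => Submodule.smul_mem _ _
      (Submodule.subset_span ⟨((e k) : ι), (e k).2, rfl⟩)
  apply Module.finite_of_fg_torsion
  intro q
  obtain ⟨v, rfl⟩ := Submodule.Quotient.mk_surjective _ q
  have hz : M.det • (Submodule.Quotient.mk v : _ ⧸ Submodule.span ℤ (X '' ↑b)) = 0 := by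
    rw [← Submodule.Quotient.mk_smul]
    exact (Submodule.Quotient.mk_eq_zero _).mpr (htor v)
  exact ⟨⟨M.det, mem_nonZeroDivisors_of_ne_zero hMdet⟩, by rwa [Submonoid.mk_smul]⟩

end Main

section Main2

variable {s : ℕ} {ι : Type*}

noncomputable def charEquivFull (X : ι → (Fin s → ℤ)) (b : Finset ι) :
    {χ : AddChar (Fin s → ℤ) ℂ // ∀ i ∈ b, χ (X i) = 1} ≃
      AddChar ((Fin s → ℤ) ⧸ Submodule.span ℤ (X '' ↑b)) ℂˣ :=
  ((Equiv.subtypeEquiv (p := fun χ : AddChar (Fin s → ℤ) ℂ => ∀ i ∈ b, χ (X i) = 1)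
      (q := fun ψ : AddChar (Fin s → ℤ) ℂˣ => ∀ i ∈ b, ψ (X i) = 1)
      (addCharUnitsEquiv (Fin s → ℤ)) (fun χ => by
      constructor
      · intro h i hi
        exact (addCharUnitsEquiv_eq_one_iff χ (X i)).mpr (h i hi)
      · intro h i hi
        exact (addCharUnitsEquiv_eq_one_iff χ (X i)).mp (h i hi))).trans
    ((Equiv.subtypeEquivRight (p := fun ψ : AddChar (Fin s → ℤ) ℂˣ => ∀ i ∈ b, ψ (X i) = 1)
      (q := fun ψ : AddChar (Fin s → ℤ) ℂˣ => ∀ x ∈ Submodule.span ℤ (X '' ↑b), ψ x = 1)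
      (fun ψ => by
      constructor
      · intro h x hx
        refine addChar_eq_one_of_mem_span ψ (fun y hy => ?_) hx
        obtain ⟨i, hi, rfl⟩ := hy
        exact h i hi
      · intro h i hi
        exact h _ (Submodule.subset_span ⟨i, hi, rfl⟩))).trans
      (trivEquivQuot (Submodule.span ℤ (X '' ↑b)))))

lemma finite_triv_set (X : ι → (Fin s → ℤ)) (b : Finset ι) (hb : IsBasisOf X b) :
    Finite {χ : AddChar (Fin s → ℤ) ℂ // ∀ i ∈ b, χ (X i) = 1} := by
  have h1 := finite_quot X b hb
  have h2 := finite_addChar_units ((Fin s → ℤ) ⧸ Submodule.span ℤ (X '' ↑b))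
  exact Finite.of_equiv _ (charEquivFull X b).symm

lemma card_triv (X : ι → (Fin s → ℤ)) (b : Finset ι) (hb : IsBasisOf X b) :
    Nat.card {χ : AddChar (Fin s → ℤ) ℂ // ∀ i ∈ b, χ (X i) = 1} = detIndex X b := by
  have h1 := finite_quot X b hb
  rw [Nat.card_congr (charEquivFull X b), card_addChar_units]
  rfl

end Main2

theorem delta_eq_sum_over_points
    {s : ℕ} {ι : Type*} [Fintype ι] (X : ι → (Fin s → ℤ))
    (hX0 : ∀ i, X i ≠ 0)
    (hspan : Submodule.span ℝ (Set.range (XRe X)) = ⊤) :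
    (∑ b ∈ Finset.univ.powerset.filter (IsBasisOf X), detIndex X b) =
      ∑ᶠ χ ∈ {χ : AddChar (Fin s → ℤ) ℂ |
          ∃ b : Finset ι, IsBasisOf X b ∧ ∀ i ∈ b, χ (X i) = 1},
        Nat.card {b : Finset ι // IsBasisOf X b ∧ ∀ i ∈ b, χ (X i) = 1} := by
  classical
  have hfinS : ∀ b : Finset ι, IsBasisOf X b →
      ({χ : AddChar (Fin s → ℤ) ℂ | ∀ i ∈ b, χ (X i) = 1}).Finite := by
    intro b hb
    have := finite_triv_set X b hb
    exact Set.finite_coe_iff.mp this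
  have hPfin : ({χ : AddChar (Fin s → ℤ) ℂ |
      ∃ b : Finset ι, IsBasisOf X b ∧ ∀ i ∈ b, χ (X i) = 1}).Finite := by
    have hsub : {χ : AddChar (Fin s → ℤ) ℂ |
        ∃ b : Finset ι, IsBasisOf X b ∧ ∀ i ∈ b, χ (X i) = 1} ⊆
        ⋃ b ∈ {b : Finset ι | IsBasisOf X b},
          {χ : AddChar (Fin s → ℤ) ℂ | ∀ i ∈ b, χ (X i) = 1} := by
      rintro χ ⟨b, hb, h⟩
      exact Set.mem_biUnion hb h
    exact (Set.Finite.biUnion (Set.toFinite _) (fun b hb => hfinS b hb)).subset hsub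
  rw [← hPfin.coe_toFinset, finsum_mem_coe_finset]
  have hcount : ∀ χ : AddChar (Fin s → ℤ) ℂ,
      Nat.card {b : Finset ι // IsBasisOf X b ∧ ∀ i ∈ b, χ (X i) = 1} =
        ∑ b ∈ Finset.univ.powerset.filter (IsBasisOf X),
          (if (∀ i ∈ b, χ (X i) = 1) then 1 else 0) := by
    intro χ
    rw [Nat.card_eq_fintype_card, Fintype.card_subtype, ← Finset.card_filter,
      Finset.powerset_univ, Finset.filter_filter]
  rw [Finset.sum_congr rfl (fun χ _ => hcount χ), Finset.sum_comm]
  apply Finset.sum_congr rfl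
  intro b hb
  have hbB : IsBasisOf X b := (Finset.mem_filter.mp hb).2
  have hSfin := hfinS b hbB
  rw [← Finset.card_filter]
  have hfeq : hPfin.toFinset.filter (fun χ => ∀ i ∈ b, χ (X i) = 1) = hSfin.toFinset := by
    ext χ
    simp only [Finset.mem_filter, Set.Finite.mem_toFinset, Set.mem_setOf_eq]
    constructor
    · rintro ⟨-, h⟩
      exact h
    · intro h
      exact ⟨⟨b, hbB, h⟩, h⟩
  rw [hfeq, ← Set.ncard_eq_toFinset_card _ hSfin, ← Nat.card_coe_set_eq,
    ← card_triv X b hbB]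
  rfl
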